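/- Let H be a complex Hilbert space and let S be a set of pairwise commuting self-adjoint bounded operators on H, each of which is of the form λ·1 + k for some λ ∈ ℂ and some compact operator k on H. Then H admits a Hilbert (orthonormal) basis consisting of simultaneous eigenvectors: there is an orthonormal basis (e_b) of H such that for every basis vector e_b and every T ∈ S there exists a scalar μ ∈ ℂ with T e_b = μ · e_b. -/

import Mathlib

open Metric Submodule Set
open scoped NNReal

variable {E : Type*} [NormedAddCommGroup E] [InnerProductSpace ℂ E]

lemma aux_compact_of_findim [FiniteDimensional ℂ E] (f : E →L[ℂ] E) :
    IsCompactOperator (f : E → E) := by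
  have h1 : IsCompactOperator (id : E → E) :=
    ⟨closedBall 0 1, isCompact_closedBall 0 1, by
      simpa using Metric.closedBall_mem_nhds (0 : E) one_pos⟩
  simpa [Function.comp] using h1.continuous_comp f.continuous

lemma aux_findim_of_compact_bddBelow [CompleteSpace E] {k : E →L[ℂ] E}
    (hk : IsCompactOperator (k : E → E)) {c : ℝ≥0}
    (hbd : ∀ x : E, ‖x‖ ≤ (c : ℝ) * ‖k x‖) : FiniteDimensional ℂ E := by
  have hui : IsUniformInducing (k : E → E) :=
    ((k.antilipschitz_of_bound hbd).isUniformEmbedding k.uniformContinuous).toIsUniformInducing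
  obtain ⟨K, hKc, hKsub⟩ := hk.image_closedBall_subset_compact 1
  have htb : TotallyBounded ((k : E → E) '' closedBall 0 1) :=
    hKc.totallyBounded.subset hKsub
  have htb2 : TotallyBounded (closedBall (0 : E) 1) :=
    (totallyBounded_image_iff hui).1 htb
  have hcomp : IsCompact (closedBall (0 : E) 1) :=
    TotallyBounded.isCompact_of_isClosed htb2 Metric.isClosed_closedBall
  exact .of_isCompact_closedBall₀ ℂ one_pos hcomp

local notation "⟪" x ", " y "⟫" => @inner ℂ _ _ x y

lemma aux_decomp [CompleteSpace E] {T : E →L[ℂ] E} (hT : IsSelfAdjoint T)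
    {lam : ℂ} {k : E →L[ℂ] E} (hk : IsCompactOperator (k : E → E))
    (hTk : T = lam • 1 + k) :
    ∃ (r : ℝ) (k' : E →L[ℂ] E), IsSelfAdjoint k' ∧ IsCompactOperator (k' : E → E) ∧
      T = (r : ℂ) • 1 + k' := by
  have hsa1 : IsSelfAdjoint ((lam.re : ℂ) • (1 : E →L[ℂ] E)) := by
    rw [IsSelfAdjoint, star_smul, star_one, RCLike.star_def, Complex.conj_ofReal]
  refine ⟨lam.re, T - (lam.re : ℂ) • 1, hT.sub hsa1, ?_, by abel⟩
  by_cases hfd : FiniteDimensional ℂ E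
  · exact aux_compact_of_findim _
  -- infinite dimensional: lam must be real
  have him : lam.im = 0 := by
    by_contra him
    apply hfd
    have hbd : ∀ x : E, ‖x‖ ≤ (Real.toNNReal |lam.im|⁻¹ : ℝ) * ‖k x‖ := by
      intro x
      have hsym : ⟪T x, x⟫ = ⟪x, T x⟫ := hT.isSymmetric x x
      have hreal : (⟪T x, x⟫).im = 0 := by
        have hc : (starRingEnd ℂ) ⟪T x, x⟫ = ⟪T x, x⟫ :=
          (inner_conj_symm x (T x)).trans hsym.symm
        exact Complex.conj_eq_iff_im.mp hc
      have hTx : T x = lam • x + k x := by rw [hTk]; simp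
      have hexp : ⟪T x, x⟫ = (starRingEnd ℂ) lam * ⟪x, x⟫ + ⟪k x, x⟫ := by
        rw [hTx, inner_add_left, inner_smul_left]
      have him2 : -lam.im * (‖x‖ ^ 2) + (⟪k x, x⟫).im = 0 := by
        have := congrArg Complex.im hexp
        rw [hreal] at this
        have hxx : ⟪x, x⟫ = ((‖x‖ : ℂ) ^ 2) := by
          rw [inner_self_eq_norm_sq_to_K]; norm_cast
        rw [hxx] at this
        simp [Complex.add_im, Complex.mul_im, Complex.conj_re, Complex.conj_im,
          ← Complex.ofReal_pow] at this
        linarith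
      have hCS : |(⟪k x, x⟫).im| ≤ ‖k x‖ * ‖x‖ := by
        calc |(⟪k x, x⟫).im| ≤ ‖⟪k x, x⟫‖ := Complex.abs_im_le_norm _
          _ = ‖⟪k x, x⟫‖ := rfl
          _ ≤ ‖k x‖ * ‖x‖ := norm_inner_le_norm _ _
      have hi : (⟪k x, x⟫).im = lam.im * ‖x‖ ^ 2 := by linarith
      have key : |lam.im| * ‖x‖ ^ 2 ≤ ‖k x‖ * ‖x‖ := by
        calc |lam.im| * ‖x‖ ^ 2 = |lam.im * ‖x‖ ^ 2| := by
              rw [abs_mul, abs_of_nonneg (by positivity : (0:ℝ) ≤ ‖x‖ ^ 2)]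
          _ = |(⟪k x, x⟫).im| := by rw [hi]
          _ ≤ ‖k x‖ * ‖x‖ := hCS
      rcases eq_or_lt_of_le (norm_nonneg x) with h0 | h0
      · simp [← h0]; positivity
      · have h1 : |lam.im| * ‖x‖ ≤ ‖k x‖ := by
          have := key
          nlinarith
        rw [Real.coe_toNNReal _ (by positivity), ← div_eq_inv_mul,
          le_div_iff₀ (by positivity : (0:ℝ) < |lam.im|)]
        linarith [h1]
    exact aux_findim_of_compact_bddBelow hk hbd
  have hlam : lam = (lam.re : ℂ) := Complex.ext rfl (by simp [him])
  have : T - (lam.re : ℂ) • 1 = k := by rw [hTk, ← hlam]; abel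
  rw [this]; exact hk

open Filter Topology in
lemma aux_eigen [CompleteSpace E] {A : E →L[ℂ] E} (hA : IsSelfAdjoint A)
    (hk : IsCompactOperator (A : E → E)) {M : Submodule ℂ E} (hMc : IsClosed (M : Set E))
    (hinv : ∀ x ∈ M, A x ∈ M) (hne : ∃ x ∈ M, A x ≠ 0) :
    ∃ (s : ℝ) (v : E), s ≠ 0 ∧ v ∈ M ∧ v ≠ 0 ∧ A v = (s : ℂ) • v := by
  classical
  set U : Set E := {x | x ∈ M ∧ ‖x‖ = 1} with hU
  set f : E → ℝ := fun x => (⟪A x, x⟫).re with hf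
  -- U nonempty
  obtain ⟨x₀, hx₀M, hx₀⟩ := hne
  have hx₀0 : x₀ ≠ 0 := fun h => hx₀ (by simp [h])
  have hunit : ∀ x : E, x ≠ 0 → ‖((‖x‖⁻¹ : ℝ) : ℂ) • x‖ = 1 := by
    intro x hx
    rw [norm_smul]
    simp [norm_inv, inv_mul_cancel₀ (norm_ne_zero_iff.2 hx)]
  have hUne : U.Nonempty :=
    ⟨((‖x₀‖⁻¹ : ℝ) : ℂ) • x₀, M.smul_mem _ hx₀M, hunit x₀ hx₀0⟩
  set R : Set ℝ := f '' U with hR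
  have hRne : R.Nonempty := hUne.image f
  have hRbd : ∀ r ∈ R, |r| ≤ ‖A‖ := by
    rintro r ⟨u, ⟨huM, hu1⟩, rfl⟩
    calc |f u| ≤ ‖⟪A u, u⟫‖ := Complex.abs_re_le_norm _
      _ ≤ ‖A u‖ * ‖u‖ := norm_inner_le_norm _ _
      _ ≤ (‖A‖ * ‖u‖) * ‖u‖ := by
          have := A.le_opNorm u; nlinarith [norm_nonneg u]
      _ = ‖A‖ := by rw [hu1]; ring
  have hbdd : BddAbove R := ⟨‖A‖, fun r hr => (abs_le.1 (hRbd r hr)).2⟩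
  have hbdd' : BddBelow R := ⟨-‖A‖, fun r hr => (abs_le.1 (hRbd r hr)).1⟩
  set cp : ℝ := sSup R with hcp
  set cm : ℝ := sInf R with hcm
  set m : ℝ := max |cp| |cm| with hm
  have hm0 : 0 ≤ m := le_trans (abs_nonneg _) (le_max_left _ _)
  have hfm : ∀ u ∈ U, |f u| ≤ m := by
    intro u hu
    have h1 : f u ≤ cp := le_csSup hbdd ⟨u, hu, rfl⟩
    have h2 : cm ≤ f u := csInf_le hbdd' ⟨u, hu, rfl⟩
    rw [abs_le]
    constructor
    · calc -m ≤ -|cm| := neg_le_neg (le_max_right _ _)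
        _ ≤ cm := neg_abs_le _
        _ ≤ f u := h2
    · exact h1.trans ((le_abs_self _).trans (le_max_left _ _))
  -- quadratic homogeneity
  have hfhom : ∀ (c : ℝ) (x : E), f (((c : ℝ) : ℂ) • x) = c ^ 2 * f x := by
    intro c x
    have : ⟪A ((c : ℂ) • x), (c : ℂ) • x⟫ = (c : ℂ) * ((c : ℂ) * ⟪A x, x⟫) := by
      rw [map_smul, inner_smul_left, inner_smul_right, Complex.conj_ofReal]
    simp only [hf, this, Complex.mul_re, Complex.ofReal_re, Complex.ofReal_im]
    ring
  have hbM : ∀ x ∈ M, |f x| ≤ m * ‖x‖ ^ 2 := by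
    intro x hxM
    rcases eq_or_ne x 0 with rfl | hx0
    · simp [hf]
    · have hu : ((‖x‖⁻¹ : ℝ) : ℂ) • x ∈ U := ⟨M.smul_mem _ hxM, hunit x hx0⟩
      have hx : x = ((‖x‖ : ℝ) : ℂ) • (((‖x‖⁻¹ : ℝ) : ℂ) • x) := by
        rw [smul_smul, ← Complex.ofReal_mul, mul_inv_cancel₀ (norm_ne_zero_iff.2 hx0)]
        simp
      calc |f x| = |f (((‖x‖ : ℝ) : ℂ) • (((‖x‖⁻¹ : ℝ) : ℂ) • x))| := by rw [← hx]
        _ = ‖x‖ ^ 2 * |f (((‖x‖⁻¹ : ℝ) : ℂ) • x)| := by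
            rw [hfhom, abs_mul, abs_of_nonneg (by positivity : (0:ℝ) ≤ ‖x‖ ^ 2)]
        _ ≤ ‖x‖ ^ 2 * m := by
            have := hfm _ hu
            nlinarith [abs_nonneg (f (((‖x‖⁻¹ : ℝ) : ℂ) • x)), sq_nonneg ‖x‖]
        _ = m * ‖x‖ ^ 2 := by ring
  -- norm bound on M
  have hAm : ∀ x ∈ M, ‖A x‖ ≤ m * ‖x‖ := by
    -- first for unit vectors
    have hunitcase : ∀ u ∈ U, ‖A u‖ ≤ m := by
      intro u hu
      rcases eq_or_ne (A u) 0 with h0 | h0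
      · simp [h0, hm0]
      · set y : E := ((‖A u‖⁻¹ : ℝ) : ℂ) • A u with hy
        have hyM : y ∈ M := M.smul_mem _ (hinv u hu.1)
        have hy1 : ‖y‖ = 1 := hunit _ h0
        have huy : u + y ∈ M := M.add_mem hu.1 hyM
        have huy' : u - y ∈ M := M.sub_mem hu.1 hyM
        have h1 : ⟪A (u + y), u + y⟫ - ⟪A (u - y), u - y⟫
            = 2 * (⟪A u, y⟫ + ⟪A y, u⟫) := by
          simp only [map_add, map_sub, inner_add_left, inner_add_right,
            inner_sub_left, inner_sub_right]
          ring
        have h2 : (⟪A y, u⟫).re = (⟪A u, y⟫).re := by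
          have hsmm := hA.isSymmetric y u
          simp only [ContinuousLinearMap.coe_coe] at hsmm
          rw [hsmm, ← inner_conj_symm y (A u)]
          exact Complex.conj_re _
        have h3 : f (u + y) - f (u - y) = 4 * (⟪A u, y⟫).re := by
          have := congrArg Complex.re h1
          simp only [Complex.sub_re, Complex.mul_re, Complex.add_re] at this
          simp only [hf]
          rw [show ((2:ℂ)).re = 2 from rfl] at this
          rw [show ((2:ℂ)).im = 0 from rfl] at this
          simp only [h2] at this
          linarith
        have h4 : (⟪A u, y⟫).re = ‖A u‖ := by
          rw [hy, inner_smul_right]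
          have : ⟪A u, A u⟫ = ((‖A u‖ : ℝ) : ℂ) ^ 2 := by
            rw [inner_self_eq_norm_sq_to_K]; norm_cast
          rw [this]
          simp only [Complex.mul_re, Complex.ofReal_re, Complex.ofReal_im]
          have : (((‖A u‖ : ℝ) : ℂ) ^ 2).re = ‖A u‖ ^ 2 := by
            norm_cast
          rw [this]
          have : (((‖A u‖ : ℝ) : ℂ) ^ 2).im = 0 := by norm_cast
          rw [this]
          have hAun : (0:ℝ) < ‖A u‖ := norm_pos_iff.2 h0
          field_simp [sq]
          simp
        have hpar : ‖u + y‖ ^ 2 + ‖u - y‖ ^ 2 = 4 := by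
          have hp := parallelogram_law_with_norm ℂ u y
          rw [hu.2, hy1] at hp
          nlinarith [hp]
        have hb1 : |f (u + y)| ≤ m * ‖u + y‖ ^ 2 := hbM _ huy
        have hb2 : |f (u - y)| ≤ m * ‖u - y‖ ^ 2 := hbM _ huy'
        have habs1 : f (u + y) ≤ m * ‖u + y‖ ^ 2 := (abs_le.1 hb1).2
        have habs2 : -(m * ‖u - y‖ ^ 2) ≤ f (u - y) := (abs_le.1 hb2).1
        have hsum : m * ‖u + y‖ ^ 2 + m * ‖u - y‖ ^ 2 = 4 * m := by
          calc m * ‖u + y‖ ^ 2 + m * ‖u - y‖ ^ 2 = m * (‖u + y‖ ^ 2 + ‖u - y‖ ^ 2) := by ring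
            _ = 4 * m := by rw [hpar]; ring
        linarith
    intro x hxM
    rcases eq_or_ne x 0 with rfl | hx0
    · simp
    · have hu : ((‖x‖⁻¹ : ℝ) : ℂ) • x ∈ U := ⟨M.smul_mem _ hxM, hunit x hx0⟩
      have := hunitcase _ hu
      rw [map_smul, norm_smul] at this
      have hnx : (0:ℝ) < ‖x‖ := norm_pos_iff.2 hx0
      simp only [Complex.norm_real, norm_inv, norm_norm, abs_inv, abs_norm] at this
      calc ‖A x‖ = ‖x‖ * (‖x‖⁻¹ * ‖A x‖) := by field_simp
        _ ≤ ‖x‖ * m := by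
            apply mul_le_mul_of_nonneg_left this hnx.le
        _ = m * ‖x‖ := by ring
  have hmpos : 0 < m := by
    rcases hm0.lt_or_eq with h | h
    · exact h
    · exfalso
      apply hx₀
      have h2 := hAm x₀ hx₀M
      rw [← h, zero_mul] at h2
      exact norm_le_zero_iff.1 h2
  -- choose s among cp, cm with |s| = m, and an approximating sequence
  have hex : ∃ s : ℝ, |s| = m ∧ ∃ u : ℕ → ℝ,
      Tendsto u atTop (𝓝 s) ∧ ∀ n, u n ∈ R := by
    rcases le_total |cm| |cp| with h | h
    · obtain ⟨u, -, hu2, hu3⟩ := exists_seq_tendsto_sSup hRne hbdd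
      exact ⟨cp, by rw [hm]; rw [max_eq_left h], u, hu2, hu3⟩
    · obtain ⟨u, -, hu2, hu3⟩ := exists_seq_tendsto_sInf hRne hbdd'
      exact ⟨cm, by rw [hm]; rw [max_eq_right h], u, hu2, hu3⟩
  obtain ⟨s, hsm, u, hu, huR⟩ := hex
  have hs0 : s ≠ 0 := fun h => by rw [h] at hsm; simp at hsm; exact hmpos.ne' hsm.symm
  -- extract vectors
  have hx : ∀ n, ∃ x ∈ U, f x = u n := fun n => (huR n).imp (fun x hx => ⟨hx.1, hx.2⟩)
  choose x hxU hxf using hx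
  -- the key approximate eigenvector estimate
  have hkey : Tendsto (fun n => A (x n) - (s : ℂ) • x n) atTop (𝓝 0) := by
    have hsq : ∀ n, ‖A (x n) - (s : ℂ) • x n‖ ^ 2 ≤ m ^ 2 + s ^ 2 - 2 * s * u n := by
      intro n
      have hx1 : ‖x n‖ = 1 := (hxU n).2
      have hxM : x n ∈ M := (hxU n).1
      have hnorm : ‖A (x n) - (s : ℂ) • x n‖ ^ 2
          = ‖A (x n)‖ ^ 2 - 2 * ((⟪A (x n), (s : ℂ) • x n⟫).re) + ‖(s : ℂ) • x n‖ ^ 2 := by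
        have := @norm_sub_sq ℂ _ _ _ _ (A (x n)) ((s : ℂ) • x n)
        exact this
      have hre : (⟪A (x n), (s : ℂ) • x n⟫).re = s * u n := by
        rw [inner_smul_right]
        simp only [Complex.mul_re, Complex.ofReal_re, Complex.ofReal_im]
        rw [← hxf n]
        simp [hf]
      have hA1 : ‖A (x n)‖ ≤ m := by
        have := hAm (x n) hxM; rw [hx1] at this; simpa using this
      have hsn : ‖(s : ℂ) • x n‖ ^ 2 = s ^ 2 := by
        rw [norm_smul, hx1]
        simp [sq_abs]
      rw [hnorm, hre, hsn]
      nlinarith [norm_nonneg (A (x n))]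
    have hlim : Tendsto (fun n => m ^ 2 + s ^ 2 - 2 * s * u n) atTop (𝓝 0) := by
      have : Tendsto (fun n => m ^ 2 + s ^ 2 - 2 * s * u n) atTop
          (𝓝 (m ^ 2 + s ^ 2 - 2 * s * s)) := by
        exact (tendsto_const_nhds.sub ((hu.const_mul (2 * s)))).congr (fun n => by ring)
      have hms : m ^ 2 + s ^ 2 - 2 * s * s = 0 := by
        have : s ^ 2 = m ^ 2 := by rw [← sq_abs s, hsm]
        nlinarith [this]
      rwa [hms] at this
    have hn2 : Tendsto (fun n => ‖A (x n) - (s : ℂ) • x n‖ ^ 2) atTop (𝓝 0) :=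
      squeeze_zero (fun n => by positivity) hsq hlim
    have hn1 : Tendsto (fun n => ‖A (x n) - (s : ℂ) • x n‖) atTop (𝓝 0) := by
      have := hn2.sqrt
      simp only [Real.sqrt_zero] at this
      refine this.congr fun n => ?_
      rw [Real.sqrt_sq (norm_nonneg _)]
    rwa [tendsto_zero_iff_norm_tendsto_zero]
  -- compactness
  obtain ⟨K, hKc, hKsub⟩ := hk.image_closedBall_subset_compact 1
  have hmemK : ∀ n, A (x n) ∈ K := fun n =>
    hKsub ⟨x n, by simp [Metric.mem_closedBall, (hxU n).2.le, dist_eq_norm], rfl⟩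
  obtain ⟨y, hyK, φ, hφ, hAy⟩ := hKc.tendsto_subseq hmemK
  have hsx : Tendsto (fun n => (s : ℂ) • x (φ n)) atTop (𝓝 y) := by
    have h1 : Tendsto (fun n => A (x (φ n)) - (s : ℂ) • x (φ n)) atTop (𝓝 0) :=
      hkey.comp hφ.tendsto_atTop
    have := hAy.sub h1
    simpa using this
  set w : E := ((s : ℂ))⁻¹ • y with hw
  have hxw : Tendsto (fun n => x (φ n)) atTop (𝓝 w) := by
    have h5 := hsx.const_smul (((s : ℂ))⁻¹)
    have hcast : ((s : ℂ))⁻¹ * (s : ℂ) = 1 :=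
      inv_mul_cancel₀ (by exact_mod_cast hs0)
    simp only [smul_smul, hcast, one_smul] at h5
    exact h5
  have hwM : w ∈ M := hMc.mem_of_tendsto hxw (Eventually.of_forall fun n => (hxU (φ n)).1)
  have hwn : ‖w‖ = 1 := by
    have := hxw.norm
    simp only [(fun n => (hxU (φ n)).2 : ∀ n, ‖x (φ n)‖ = 1)] at this
    exact tendsto_nhds_unique tendsto_const_nhds this |>.symm
  have hAw : A w = (s : ℂ) • w := by
    have h1 : Tendsto (fun n => A (x (φ n))) atTop (𝓝 (A w)) :=
      (A.continuous.tendsto w).comp hxw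
    have h2 : A w = y := tendsto_nhds_unique h1 hAy
    rw [h2, hw, smul_smul, mul_inv_cancel₀ (by exact_mod_cast hs0 : ((s:ℝ):ℂ) ≠ 0), one_smul]
  exact ⟨s, w, hs0, hwM, by simp [hwn, ← norm_ne_zero_iff], hAw⟩

lemma aux_findim_eigenspace {A : E →L[ℂ] E}
    (hk : IsCompactOperator (A : E → E)) {s : ℝ} (hs : s ≠ 0)
    {W : Submodule ℂ E} (hWc : IsClosed (W : Set E))
    (hW : ∀ x ∈ W, A x = (s : ℂ) • x) :
    FiniteDimensional ℂ W := by
  obtain ⟨K, hKc, hKsub⟩ := hk.image_closedBall_subset_compact 1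
  set C : Set E := (W : Set E) ∩ Metric.closedBall 0 1 with hC
  have hCc : IsClosed C := hWc.inter Metric.isClosed_closedBall
  have hCsub : C ⊆ (fun z => ((s : ℂ))⁻¹ • z) '' K := by
    rintro x ⟨hxW, hx1⟩
    refine ⟨A x, hKsub ⟨x, hx1, rfl⟩, ?_⟩
    rw [hW x hxW]
    simp only []
    rw [smul_smul, inv_mul_cancel₀ (by exact_mod_cast hs : ((s:ℝ):ℂ) ≠ 0), one_smul]
  have hKc' : IsCompact ((fun z => ((s : ℂ))⁻¹ • z) '' K) :=
    hKc.image (continuous_const_smul _)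
  have hCcomp : IsCompact C := hKc'.of_isClosed_subset hCc hCsub
  have hball : Metric.closedBall (0 : W) 1 = (Subtype.val : W → E) ⁻¹' C := by
    ext x
    simp [hC, Metric.mem_closedBall, dist_eq_norm, x.2]
  have hcomp : IsCompact (Metric.closedBall (0 : W) 1) := by
    rw [hball]
    exact hWc.isClosedEmbedding_subtypeVal.isCompact_preimage hCcomp
  exact .of_isCompact_closedBall₀ ℂ one_pos hcomp

lemma aux_common_eigen (S : Set (E →L[ℂ] E))
    (hcomm : ∀ T₁ ∈ S, ∀ T₂ ∈ S, T₁ * T₂ = T₂ * T₁)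
    {W : Submodule ℂ E} (hWfd : FiniteDimensional ℂ W) (hWne : W ≠ ⊥)
    (hWinv : ∀ T ∈ S, ∀ x ∈ W, T x ∈ W) :
    ∃ v ∈ W, v ≠ 0 ∧ ∀ T ∈ S, ∃ mu : ℂ, T v = mu • v := by
  classical
  set 𝒰 : Set (Submodule ℂ E) :=
    {U | U ≠ ⊥ ∧ U ≤ W ∧ ∀ T ∈ S, ∀ x ∈ U, T x ∈ U} with h𝒰
  have hWU : W ∈ 𝒰 := ⟨hWne, le_rfl, hWinv⟩
  have hP : ∃ n, ∃ U ∈ 𝒰, Module.finrank ℂ U = n := ⟨_, W, hWU, rfl⟩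
  set n₀ := Nat.find hP with hn₀
  obtain ⟨U, hU𝒰, hUrank⟩ := Nat.find_spec hP
  obtain ⟨hUne, hUW, hUinv⟩ := hU𝒰
  haveI : FiniteDimensional ℂ U := Submodule.finiteDimensional_of_le hUW
  haveI : Nontrivial U := Submodule.nontrivial_iff_ne_bot.2 hUne
  have hscal : ∀ T ∈ S, ∃ mu : ℂ, ∀ x ∈ U, T x = mu • x := by
    intro T hT
    set g : Module.End ℂ U := (T : E →ₗ[ℂ] E).restrict (hUinv T hT) with hg
    obtain ⟨mu, hmu⟩ := Module.End.exists_eigenvalue g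
    obtain ⟨u, huv⟩ := hmu.exists_hasEigenvector
    have hu0 : (u : E) ≠ 0 := fun h => huv.2 (Subtype.coe_injective h)
    have hTu : T u = mu • (u : E) := by
      have := huv.apply_eq_smul
      have h2 := congrArg (Subtype.val : U → E) this
      simpa [hg, LinearMap.restrict_apply] using h2
    set U' : Submodule ℂ E := U ⊓ LinearMap.ker ((T - mu • (1 : E →L[ℂ] E)) : E →ₗ[ℂ] E) with hU'
    have hU'mem : (u : E) ∈ U' := by
      refine ⟨u.2, LinearMap.mem_ker.2 ?_⟩
      show (T - mu • (1 : E →L[ℂ] E)) u = 0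
      rw [ContinuousLinearMap.sub_apply, ContinuousLinearMap.smul_apply,
        ContinuousLinearMap.one_apply, hTu, sub_self]
    have hU'ne : U' ≠ ⊥ := fun h => hu0 ((Submodule.mem_bot ℂ).1 (h ▸ hU'mem))
    have hU'le : U' ≤ U := inf_le_left
    have hU'inv : ∀ T' ∈ S, ∀ x ∈ U', T' x ∈ U' := by
      rintro T' hT' x ⟨hxU, hxk⟩
      refine ⟨hUinv T' hT' x hxU, ?_⟩
      have hxk' : T x - mu • x = 0 := by
        have := LinearMap.mem_ker.1 hxk
        simpa using this
      have hc : T (T' x) = T' (T x) := by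
        have h5 := hcomm T hT T' hT'
        have h6 := congrArg (fun f => (f : E →L[ℂ] E) x) h5
        simpa [ContinuousLinearMap.mul_apply] using h6
      refine LinearMap.mem_ker.2 ?_
      show (T - mu • (1 : E →L[ℂ] E)) (T' x) = 0
      rw [ContinuousLinearMap.sub_apply, ContinuousLinearMap.smul_apply,
        ContinuousLinearMap.one_apply, hc, sub_eq_zero.mp hxk', map_smul, sub_self]
    have hfr : n₀ ≤ Module.finrank ℂ U' :=
      Nat.find_min' hP ⟨U', ⟨hU'ne, hU'le.trans hUW, hU'inv⟩, rfl⟩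
    have hUeq : U' = U :=
      Submodule.eq_of_le_of_finrank_le hU'le (by rw [hUrank]; exact hfr)
    refine ⟨mu, fun x hxU => ?_⟩
    have hxU' : x ∈ U' := hUeq ▸ hxU
    have h2 := LinearMap.mem_ker.1 hxU'.2
    have h3 : T x - mu • x = 0 := by simpa using h2
    exact sub_eq_zero.mp h3
  obtain ⟨v, hvU, hv0⟩ := Submodule.exists_mem_ne_zero_of_ne_bot hUne
  exact ⟨v, hUW hvU, hv0, fun T hT => (hscal T hT).imp fun mu h => h v hvU⟩

lemma aux_core [CompleteSpace E] (S : Set (E →L[ℂ] E))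
    (hcomm : ∀ T₁ ∈ S, ∀ T₂ ∈ S, T₁ * T₂ = T₂ * T₁)
    (hsa : ∀ T ∈ S, IsSelfAdjoint T)
    (hform : ∀ T ∈ S, ∃ (lam : ℂ) (k : E →L[ℂ] E),
      IsCompactOperator (k : E → E) ∧ T = lam • (1 : E →L[ℂ] E) + k)
    {M : Submodule ℂ E} (hMc : IsClosed (M : Set E)) (hMne : M ≠ ⊥)
    (hMinv : ∀ T ∈ S, ∀ x ∈ M, T x ∈ M) :
    ∃ v ∈ M, v ≠ 0 ∧ ∀ T ∈ S, ∃ mu : ℂ, T v = mu • v := by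
  by_cases hcase : ∀ T ∈ S, ∃ mu : ℂ, ∀ x ∈ M, T x = mu • x
  · obtain ⟨v, hvM, hv0⟩ := Submodule.exists_mem_ne_zero_of_ne_bot hMne
    exact ⟨v, hvM, hv0, fun T hT => ((hcase T hT).imp fun mu h => h v hvM)⟩
  · push_neg at hcase
    obtain ⟨T₀, hT₀S, hT₀⟩ := hcase
    obtain ⟨lam, k, hkc, hkT⟩ := hform T₀ hT₀S
    obtain ⟨r, k', hk'sa, hk'c, hk'T⟩ := aux_decomp (hsa T₀ hT₀S) hkc hkT
    have hk'x : ∀ x : E, k' x = T₀ x - (r : ℂ) • x := by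
      intro x
      rw [hk'T]
      simp
    have hk'inv : ∀ x ∈ M, k' x ∈ M := fun x hx => by
      rw [hk'x]
      exact M.sub_mem (hMinv T₀ hT₀S x hx) (M.smul_mem _ hx)
    have hk'ne : ∃ x ∈ M, k' x ≠ 0 := by
      obtain ⟨x, hxM, hxne⟩ := hT₀ (r : ℂ)
      refine ⟨x, hxM, fun h => hxne ?_⟩
      rw [hk'x] at h
      exact sub_eq_zero.mp h
    obtain ⟨s, v0, hs0, hv0M, hv00, hv0eig⟩ := aux_eigen hk'sa hk'c hMc hk'inv hk'ne
    set W : Submodule ℂ E := M ⊓ LinearMap.ker ((k' - (s : ℂ) • (1 : E →L[ℂ] E)) : E →ₗ[ℂ] E) with hW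
    have hWeig : ∀ x ∈ W, k' x = ((s : ℝ) : ℂ) • x := by
      rintro x ⟨-, hxk⟩
      have h2 := LinearMap.mem_ker.1 hxk
      have h3 : k' x - (s : ℂ) • x = 0 := by simpa using h2
      exact sub_eq_zero.mp h3
    have hWc : IsClosed (W : Set E) := by
      rw [hW, Submodule.coe_inf]
      exact hMc.inter (ContinuousLinearMap.isClosed_ker (k' - (s : ℂ) • (1 : E →L[ℂ] E)))
    haveI hWfd : FiniteDimensional ℂ W := aux_findim_eigenspace hk'c hs0 hWc hWeig
    have hWne : W ≠ ⊥ := by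
      intro h
      apply hv00
      have hmem : v0 ∈ W := by
        refine ⟨hv0M, LinearMap.mem_ker.2 ?_⟩
        show (k' - (s : ℂ) • (1 : E →L[ℂ] E)) v0 = 0
        rw [ContinuousLinearMap.sub_apply, ContinuousLinearMap.smul_apply,
          ContinuousLinearMap.one_apply, hv0eig, sub_self]
      exact (Submodule.mem_bot ℂ).1 (h ▸ hmem)
    have hWinv : ∀ T ∈ S, ∀ x ∈ W, T x ∈ W := by
      rintro T hT x ⟨hxM, hxk⟩
      refine ⟨hMinv T hT x hxM, LinearMap.mem_ker.2 ?_⟩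
      have hcomm' : T (k' x) = k' (T x) := by
        have h5 := hcomm T₀ hT₀S T hT
        have h6 := congrArg (fun f => (f : E →L[ℂ] E) x) h5
        simp only [ContinuousLinearMap.mul_apply] at h6
        rw [hk'x, hk'x, map_sub, map_smul, h6]
      have hx' : k' x = (s : ℂ) • x := hWeig x ⟨hxM, hxk⟩
      show (k' - (s : ℂ) • (1 : E →L[ℂ] E)) (T x) = 0
      rw [ContinuousLinearMap.sub_apply, ContinuousLinearMap.smul_apply,
        ContinuousLinearMap.one_apply, ← hcomm', hx', map_smul, sub_self]
    obtain ⟨v, hvW, hv0, hveig⟩ := aux_common_eigen S hcomm hWfd hWne hWinv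
    exact ⟨v, hvW.1, hv0, hveig⟩


/-- **Theorem (simultaneous diagonalization in `ℂ·1 + K(H)`).**
If `S` is a set of pairwise commuting self-adjoint bounded operators on a complex Hilbert
space `H`, each of the form `λ·1 + k` with `λ ∈ ℂ` and `k` a compact operator, then `H` has
a Hilbert (orthonormal) basis consisting of simultaneous eigenvectors of all members of
`S`. -/
theorem stmt11 {H : Type u} [NormedAddCommGroup H] [InnerProductSpace ℂ H] [CompleteSpace H]
    (S : Set (H →L[ℂ] H))
    (hcomm : ∀ T₁ ∈ S, ∀ T₂ ∈ S, T₁ * T₂ = T₂ * T₁)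
    (hsa : ∀ T ∈ S, IsSelfAdjoint T)
    (hform : ∀ T ∈ S, ∃ (lam : ℂ) (k : H →L[ℂ] H),
      IsCompactOperator k ∧ T = lam • (1 : H →L[ℂ] H) + k) :
    ∃ (ι : Type u) (b : HilbertBasis ι ℂ H),
      ∀ (i : ι), ∀ T ∈ S, ∃ mu : ℂ, T (b i) = mu • b i := by
  classical
  set G : Set H := {x : H | ‖x‖ = 1 ∧ ∀ T ∈ S, ∃ mu : ℂ, T x = mu • x} with hG
  set 𝒮 : Set (Set H) :=
    {O | O ⊆ G ∧ ∀ x ∈ O, ∀ y ∈ O, x ≠ y → (inner ℂ x y : ℂ) = 0} with h𝒮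
  have hchain : ∀ c ⊆ 𝒮, IsChain (· ⊆ ·) c → ∃ ub ∈ 𝒮, ∀ s ∈ c, s ⊆ ub := by
    intro c hc hch
    refine ⟨⋃₀ c, ⟨?_, ?_⟩, fun s hs => Set.subset_sUnion_of_mem hs⟩
    · rintro x ⟨t, htc, hxt⟩
      exact (hc htc).1 hxt
    · rintro x ⟨t, htc, hxt⟩ y ⟨t', ht'c, hyt'⟩ hxy
      rcases eq_or_ne t t' with rfl | htt'
      · exact (hc htc).2 x hxt y hyt' hxy
      · rcases hch.total htc ht'c with h | h
        · exact (hc ht'c).2 x (h hxt) y hyt' hxy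
        · exact (hc htc).2 x hxt y (h hyt') hxy
  obtain ⟨O, hOmax⟩ := zorn_subset 𝒮 hchain
  have hOS : O ∈ 𝒮 := hOmax.prop
  have honb : Orthonormal ℂ (Subtype.val : O → H) := by
    rw [orthonormal_subtype_iff_ite]
    intro v hv w hw
    split_ifs with h
    · subst h
      have h1 : ‖v‖ = 1 := (hOS.1 hv).1
      rw [inner_self_eq_norm_sq_to_K, h1]
      norm_num
    · exact hOS.2 v hv w hw h
  have horth : (Submodule.span ℂ O)ᗮ = ⊥ := by
    by_contra hne
    set M : Submodule ℂ H := (Submodule.span ℂ O)ᗮ with hM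
    have hMc : IsClosed (M : Set H) := Submodule.isClosed_orthogonal _
    have hMinv : ∀ T ∈ S, ∀ x ∈ M, T x ∈ M := by
      intro T hT x hxM
      rw [hM, Submodule.mem_orthogonal]
      intro z hz
      induction hz using Submodule.span_induction with
      | mem e he =>
        obtain ⟨mu, hmu⟩ := (hOS.1 he).2 T hT
        have hsym : (inner ℂ (T e) x : ℂ) = inner ℂ e (T x) := (hsa T hT).isSymmetric e x
        have he0 : (inner ℂ e x : ℂ) = 0 :=
          (Submodule.mem_orthogonal _ _).1 hxM e (Submodule.subset_span he)
        rw [← hsym, hmu, inner_smul_left, he0, mul_zero]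
      | zero => simp
      | add a b _ _ ha hb => rw [inner_add_left, ha, hb, add_zero]
      | smul c a _ ha => rw [inner_smul_left, ha, mul_zero]
    obtain ⟨v, hvM, hv0, hveig⟩ := aux_core S hcomm hsa hform hMc hne hMinv
    set v1 : H := ((‖v‖⁻¹ : ℝ) : ℂ) • v with hv1
    have hv1M : v1 ∈ M := M.smul_mem _ hvM
    have hv1n : ‖v1‖ = 1 := by
      rw [hv1, norm_smul]
      simp [abs_inv,
        inv_mul_cancel₀ (norm_ne_zero_iff.2 hv0)]
    have hv1G : v1 ∈ G := by
      refine ⟨hv1n, fun T hT => ?_⟩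
      obtain ⟨mu, hmu⟩ := hveig T hT
      exact ⟨mu, by rw [hv1, map_smul, hmu, smul_comm]⟩
    have hOins : insert v1 O ∈ 𝒮 := by
      constructor
      · exact Set.insert_subset hv1G hOS.1
      · intro x hx y hy hxy
        have hv1e : ∀ e ∈ O, (inner ℂ v1 e : ℂ) = 0 := by
          intro e he
          have h1 : (inner ℂ e v1 : ℂ) = 0 :=
            (Submodule.mem_orthogonal _ _).1 hv1M e (Submodule.subset_span he)
          rw [← inner_conj_symm, h1, map_zero]
        have hev1 : ∀ e ∈ O, (inner ℂ e v1 : ℂ) = 0 := fun e he =>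
          (Submodule.mem_orthogonal _ _).1 hv1M e (Submodule.subset_span he)
        rcases hx with rfl | hxO
        · rcases hy with rfl | hyO
          · exact absurd rfl hxy
          · exact hv1e y hyO
        · rcases hy with rfl | hyO
          · exact hev1 x hxO
          · exact hOS.2 x hxO y hyO hxy
    have hsub : O ⊆ insert v1 O := Set.subset_insert _ _
    have heq : insert v1 O ⊆ O := hOmax.2 hOins hsub
    have hv1O : v1 ∈ O := heq (Set.mem_insert _ _)
    have : (inner ℂ v1 v1 : ℂ) = 0 :=
      (Submodule.mem_orthogonal _ _).1 hv1M v1 (Submodule.subset_span hv1O)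
    rw [inner_self_eq_zero] at this
    rw [this] at hv1n
    simp at hv1n
  refine ⟨O, HilbertBasis.mkOfOrthogonalEqBot honb ?_, ?_⟩
  · rwa [Subtype.range_coe]
  · intro i T hT
    have hiG : (i : H) ∈ G := hOS.1 i.2
    obtain ⟨mu, hmu⟩ := hiG.2 T hT
    refine ⟨mu, ?_⟩
    rw [HilbertBasis.coe_mkOfOrthogonalEqBot]
    exact hmu
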